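/- If G₋(-x) = e^{-x} for all x > x₀, then any solution f of f'(t) = G₋(-f(t)) on a tail, with f → ∞, satisfies f(t) − log t → c for some constant c; in particular f(t)/log t → 1. -/

import Mathlib

open Filter Set

theorem stmt_9 (Gm : ℝ → ℝ) (x₀ : ℝ)
    (hGm : ∀ x, x > x₀ → Gm (-x) = Real.exp (-x))
    (f : ℝ → ℝ) (hfpos : ∀ t, 0 < t → 0 < f t)
    (hode : ∃ t₁, ∀ t ≥ t₁, HasDerivAt f (Gm (-f t)) t)
    (hftop : Tendsto f atTop atTop) :
    (∃ c : ℝ, Tendsto (fun t => f t - Real.log t) atTop (nhds c)) ∧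
      Tendsto (fun t => f t / Real.log t) atTop (nhds 1) := by
  obtain ⟨t₁, hode⟩ := hode
  obtain ⟨T, hT⟩ := eventually_atTop.mp (hftop.eventually_gt_atTop x₀)
  set t₂ := max t₁ T with ht₂def
  have hkey : ∀ x ≥ t₂, HasDerivAt (fun s => Real.exp (f s) - s) 0 x := by
    intro x hx
    have hx1 : x ≥ t₁ := le_trans (le_max_left _ _) hx
    have hx2 : f x > x₀ := hT x (le_trans (le_max_right _ _) hx)
    have h1 : HasDerivAt (fun s => Real.exp (f s)) (Real.exp (f x) * Gm (-f x)) x := by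
      have := (Real.hasDerivAt_exp (f x)).comp x (hode x hx1)
      exact this
    rw [hGm _ hx2] at h1
    have he : Real.exp (f x) * Real.exp (-f x) = 1 := by
      rw [← Real.exp_add]; simp
    rw [he] at h1
    have h2 := h1.sub (hasDerivAt_id' x)
    rw [sub_self] at h2
    exact h2
  set C := Real.exp (f t₂) - t₂ with hC
  have hconst : ∀ t ≥ t₂, Real.exp (f t) = t + C := by
    intro t ht
    have := constant_of_has_deriv_right_zero
      (f := fun s => Real.exp (f s) - s) (a := t₂) (b := t)
      (fun x hx => ((hkey x hx.1).continuousAt).continuousWithinAt)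
      (fun x hx => (hkey x hx.1).hasDerivWithinAt) t (right_mem_Icc.mpr ht)
    linarith [this]
  have hpos : ∀ t ≥ t₂, (0:ℝ) < t + C := by
    intro t ht
    rw [← hconst t ht]; exact Real.exp_pos _
  have hflog : ∀ t ≥ t₂, f t = Real.log (t + C) := by
    intro t ht
    rw [← hconst t ht, Real.log_exp]
  -- limit of f t - log t is 0
  have hratio : Tendsto (fun t : ℝ => (t + C) / t) atTop (nhds 1) := by
    have h0 : Tendsto (fun t : ℝ => C / t) atTop (nhds 0) :=
      Tendsto.div_atTop tendsto_const_nhds tendsto_id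
    have h1 : Tendsto (fun t : ℝ => 1 + C / t) atTop (nhds 1) := by
      simpa using tendsto_const_nhds.add h0
    refine h1.congr' ?_
    filter_upwards [eventually_gt_atTop (0:ℝ)] with t ht
    field_simp
  have hloglim : Tendsto (fun t : ℝ => Real.log ((t + C) / t)) atTop (nhds 0) := by
    have := (Real.continuousAt_log one_ne_zero).tendsto.comp hratio
    simpa [Function.comp_def] using this
  have hlim0 : Tendsto (fun t => f t - Real.log t) atTop (nhds 0) := by
    refine hloglim.congr' ?_
    filter_upwards [eventually_ge_atTop t₂, eventually_gt_atTop (0:ℝ)] with t ht ht0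
    rw [Real.log_div (ne_of_gt (hpos t ht)) (ne_of_gt ht0), hflog t ht]
  have h2 : Tendsto (fun t => f t / Real.log t) atTop (nhds 1) := by
    have hinv : Tendsto (fun t : ℝ => (Real.log t)⁻¹) atTop (nhds 0) :=
      Real.tendsto_log_atTop.inv_tendsto_atTop
    have h3 : Tendsto (fun t => (f t - Real.log t) * (Real.log t)⁻¹ + 1) atTop (nhds 1) := by
      simpa using (hlim0.mul hinv).add tendsto_const_nhds
    refine h3.congr' ?_
    filter_upwards [eventually_gt_atTop (1:ℝ)] with t ht
    have hlog : Real.log t ≠ 0 := ne_of_gt (Real.log_pos ht)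
    field_simp
    ring
  exact ⟨⟨0, hlim0⟩, h2⟩
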